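/- Let r ∈ T with ⟨r,r⟩ = −2, and let R be the subgroup of T generated by r, ρ(r), ρ²(r), ρ³(r), ρ⁴(r). Assume the bilinear form restricted to R is negative definite. Then (⟨r,ρ(r)⟩, ⟨r,ρ²(r)⟩) equals (1,0) or (0,1), and there exists k ∈ {1,2} such that the vectors r, ρᵏ(r), ρ²ᵏ(r), ρ³ᵏ(r) form a ℤ-basis of R whose Gram matrix is [[-2,1,0,0],[1,-2,1,0],[0,1,-2,1],[0,0,1,-2]]; in particular R is isometric to the root lattice A₄. -/
import Mathlib


open Matrix

/-- Gram matrix of `T = U ⊕ V ⊕ A₄ ⊕ A₄` (block diagonal, in the basis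
`e, f, x, y, e₁, …, e₄, e₁', …, e₄'`). -/
def G : Matrix (Fin 12) (Fin 12) ℤ :=
  !![0, 1, 0, 0, 0, 0, 0, 0, 0, 0, 0, 0;
     1, 0, 0, 0, 0, 0, 0, 0, 0, 0, 0, 0;
     0, 0, 2, 1, 0, 0, 0, 0, 0, 0, 0, 0;
     0, 0, 1, -2, 0, 0, 0, 0, 0, 0, 0, 0;
     0, 0, 0, 0, -2, 1, 0, 0, 0, 0, 0, 0;
     0, 0, 0, 0, 1, -2, 1, 0, 0, 0, 0, 0;
     0, 0, 0, 0, 0, 1, -2, 1, 0, 0, 0, 0;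
     0, 0, 0, 0, 0, 0, 1, -2, 0, 0, 0, 0;
     0, 0, 0, 0, 0, 0, 0, 0, -2, 1, 0, 0;
     0, 0, 0, 0, 0, 0, 0, 0, 1, -2, 1, 0;
     0, 0, 0, 0, 0, 0, 0, 0, 0, 1, -2, 1;
     0, 0, 0, 0, 0, 0, 0, 0, 0, 0, 1, -2]

/-- The matrix of `ρ = ρ₀ ⊕ ρ₄ ⊕ ρ₄` (block diagonal). -/
def ρ : Matrix (Fin 12) (Fin 12) ℤ :=
  !![0, -1, 0, 0, 0, 0, 0, 0, 0, 0, 0, 0;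
     -1, -1, 1, 3, 0, 0, 0, 0, 0, 0, 0, 0;
     0, 0, -1, -1, 0, 0, 0, 0, 0, 0, 0, 0;
     0, -1, 0, 1, 0, 0, 0, 0, 0, 0, 0, 0;
     0, 0, 0, 0, 0, 0, 0, -1, 0, 0, 0, 0;
     0, 0, 0, 0, 1, 0, 0, -1, 0, 0, 0, 0;
     0, 0, 0, 0, 0, 1, 0, -1, 0, 0, 0, 0;
     0, 0, 0, 0, 0, 0, 1, -1, 0, 0, 0, 0;
     0, 0, 0, 0, 0, 0, 0, 0, 0, 0, 0, -1;
     0, 0, 0, 0, 0, 0, 0, 0, 1, 0, 0, -1;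
     0, 0, 0, 0, 0, 0, 0, 0, 0, 1, 0, -1;
     0, 0, 0, 0, 0, 0, 0, 0, 0, 0, 1, -1]

/-- The bilinear form of the lattice `T`: `⟨u, v⟩ = uᵀ G v`. -/
def B (u v : Fin 12 → ℤ) : ℤ := u ⬝ᵥ G.mulVec v

/-- Gram matrix of the root lattice `A₄`. -/
def A4gram : Matrix (Fin 4) (Fin 4) ℤ :=
  !![-2, 1, 0, 0;
     1, -2, 1, 0;
     0, 1, -2, 1;
     0, 0, 1, -2]

set_option maxRecDepth 40000
set_option maxHeartbeats 2000000

lemma hGsym : G.transpose = G := by decide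
lemma hisom : ρ.transpose * G * ρ = G := by decide
lemma hrho5 : ρ ^ 5 = 1 := by decide
lemma hsumρ : (1 : Matrix (Fin 12) (Fin 12) ℤ) + ρ + ρ^2 + ρ^3 + ρ^4 = 0 := by decide

lemma Bsym (u v : Fin 12 → ℤ) : B u v = B v u := by
  unfold B
  rw [dotProduct_comm, ← hGsym, Matrix.mulVec_transpose, ← Matrix.dotProduct_mulVec, hGsym]

lemma Baddl (u w v : Fin 12 → ℤ) : B (u + w) v = B u v + B w v := by
  simp [B, add_dotProduct]

lemma Baddr (u v w : Fin 12 → ℤ) : B u (v + w) = B u v + B u w := by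
  simp [B, Matrix.mulVec_add, dotProduct_add]

lemma Bsmulr (u v : Fin 12 → ℤ) (m : ℤ) : B u (m • v) = m * B u v := by
  unfold B
  rw [Matrix.mulVec_smul, dotProduct_smul, smul_eq_mul]

lemma Bzeror (u : Fin 12 → ℤ) : B u 0 = 0 := by simp [B]

lemma Bshift (u v : Fin 12 → ℤ) : B (ρ.mulVec u) (ρ.mulVec v) = B u v := by
  unfold B
  rw [Matrix.mulVec_mulVec, Matrix.dotProduct_mulVec, ← Matrix.vecMul_transpose,
    Matrix.vecMul_vecMul, ← Matrix.mul_assoc, hisom, ← Matrix.dotProduct_mulVec]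

lemma Bpow (n : ℕ) (u v : Fin 12 → ℤ) :
    B ((ρ ^ n).mulVec u) ((ρ ^ n).mulVec v) = B u v := by
  induction n with
  | zero => simp
  | succ n ih =>
      rw [pow_succ', ← Matrix.mulVec_mulVec, ← Matrix.mulVec_mulVec, Bshift, ih]

lemma hmod (m : ℕ) : ρ ^ m = ρ ^ (m % 5) := by
  conv_lhs => rw [← Nat.div_add_mod m 5]
  rw [pow_add, pow_mul, hrho5, one_pow, one_mul]

lemma hgen (r : Fin 12 → ℤ) (m n : ℕ) :
    B ((ρ ^ m).mulVec r) ((ρ ^ n).mulVec r)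
      = B r ((ρ ^ ((5 - m % 5 + n) % 5)).mulVec r) := by
  rw [← Bpow (5 - m % 5) ((ρ ^ m).mulVec r), Matrix.mulVec_mulVec, Matrix.mulVec_mulVec,
    ← pow_add, ← pow_add, hmod (5 - m % 5 + m), hmod (5 - m % 5 + n)]
  have h : (5 - m % 5 + m) % 5 = 0 := by omega
  rw [h, pow_zero, Matrix.one_mulVec]

lemma hρ6 : ρ ^ 6 = ρ ^ 1 := by rw [hmod]

theorem stmt5 (r : Fin 12 → ℤ) (hr : B r r = -2)
    (R : Submodule ℤ (Fin 12 → ℤ))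
    (hR : R = Submodule.span ℤ {w : Fin 12 → ℤ | ∃ i < 5, w = (ρ ^ i).mulVec r})
    (hneg : ∀ v ∈ R, v ≠ 0 → B v v < 0) :
    ((B r (ρ.mulVec r) = 1 ∧ B r ((ρ ^ 2).mulVec r) = 0) ∨
      (B r (ρ.mulVec r) = 0 ∧ B r ((ρ ^ 2).mulVec r) = 1)) ∧
    ∃ k ∈ ({1, 2} : Set ℕ),
      LinearIndependent ℤ (fun j : Fin 4 => (ρ ^ (k * (j : ℕ))).mulVec r) ∧
      Submodule.span ℤ (Set.range fun j : Fin 4 => (ρ ^ (k * (j : ℕ))).mulVec r) = R ∧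
      ∀ i j : Fin 4,
        B ((ρ ^ (k * (i : ℕ))).mulVec r) ((ρ ^ (k * (j : ℕ))).mulVec r) = A4gram i j := by
  -- notation
  set a := B r (ρ.mulVec r) with ha_def
  set b := B r ((ρ ^ 2).mulVec r) with hb_def
  have hc0 : B r ((ρ ^ 0).mulVec r) = -2 := by simpa using hr
  have hc1 : B r ((ρ ^ 1).mulVec r) = a := by rw [pow_one, ha_def]
  have hc3 : B r ((ρ ^ 3).mulVec r) = b := by
    rw [Bsym]
    have h := hgen r 3 0
    norm_num at h
    rw [h, hb_def]
  have hc4 : B r ((ρ ^ 4).mulVec r) = a := by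
    rw [Bsym]
    have h := hgen r 4 0
    norm_num at h
    rw [h, ha_def]
  -- the linear relation
  have heq : r + ρ.mulVec r + (ρ ^ 2).mulVec r + (ρ ^ 3).mulVec r + (ρ ^ 4).mulVec r = 0 := by
    have h := congrArg (fun M : Matrix (Fin 12) (Fin 12) ℤ => M.mulVec r) hsumρ
    simpa [Matrix.add_mulVec, Matrix.one_mulVec, Matrix.zero_mulVec] using h
  have hab : a + b = 1 := by
    have h := congrArg (B r) heq
    rw [Baddr, Baddr, Baddr, Baddr, Bzeror, hr, hc3, hc4] at h
    rw [show B r ((ρ ^ 2).mulVec r) = b from rfl] at h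
    rw [show B r (ρ.mulVec r) = a from rfl] at h
    omega
  -- a ≤ 1
  have ha1 : a ≤ 1 := by
    by_cases hv0 : r + ρ.mulVec r = 0
    · exfalso
      have h1 : ρ.mulVec (r + ρ.mulVec r) = 0 := by rw [hv0, Matrix.mulVec_zero]
      have h2 : B r (ρ.mulVec (r + ρ.mulVec r)) = 0 := by rw [h1]; exact Bzeror r
      rw [Matrix.mulVec_add, Baddr, Matrix.mulVec_mulVec, show ρ * ρ = ρ ^ 2 from (sq ρ).symm] at h2
      rw [show B r ((ρ ^ 2).mulVec r) = b from rfl, show B r (ρ.mulVec r) = a from rfl] at h2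
      omega
    · have hvR : r + ρ.mulVec r ∈ R := by
        rw [hR]
        exact add_mem (Submodule.subset_span ⟨0, by omega, by simp⟩)
          (Submodule.subset_span ⟨1, by omega, by simp⟩)
      have h := hneg _ hvR hv0
      rw [Baddl, Baddr, Baddr, hr, Bshift, hr] at h
      rw [show B r (ρ.mulVec r) = a from rfl, Bsym (ρ.mulVec r) r,
        show B r (ρ.mulVec r) = a from rfl] at h
      omega
  -- b ≤ 1
  have hb1 : b ≤ 1 := by
    by_cases hv0 : r + (ρ ^ 2).mulVec r = 0
    · exfalso
      have h1 : ρ.mulVec (r + (ρ ^ 2).mulVec r) = 0 := by rw [hv0, Matrix.mulVec_zero]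
      have h2 : B r (ρ.mulVec (r + (ρ ^ 2).mulVec r)) = 0 := by rw [h1]; exact Bzeror r
      rw [Matrix.mulVec_add, Baddr, Matrix.mulVec_mulVec,
        show ρ * ρ ^ 2 = ρ ^ 3 from by rw [← pow_succ']] at h2
      rw [hc3, show B r (ρ.mulVec r) = a from rfl] at h2
      omega
    · have hvR : r + (ρ ^ 2).mulVec r ∈ R := by
        rw [hR]
        exact add_mem (Submodule.subset_span ⟨0, by omega, by simp⟩)
          (Submodule.subset_span ⟨2, by omega, by simp⟩)
      have h := hneg _ hvR hv0
      rw [Baddl, Baddr, Baddr, hr, Bpow, hr] at h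
      rw [show B r ((ρ ^ 2).mulVec r) = b from rfl, Bsym ((ρ ^ 2).mulVec r) r,
        show B r ((ρ ^ 2).mulVec r) = b from rfl] at h
      omega
  -- the two relation forms
  have h4 : (ρ ^ 4).mulVec r = -(r + ρ.mulVec r + (ρ ^ 2).mulVec r + (ρ ^ 3).mulVec r) := by
    apply eq_neg_of_add_eq_zero_left
    rw [← heq]; abel
  have h3 : (ρ ^ 3).mulVec r = -(r + ρ.mulVec r + (ρ ^ 2).mulVec r + (ρ ^ 4).mulVec r) := by
    apply eq_neg_of_add_eq_zero_left
    rw [← heq]; abel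
  have hcase : (a = 1 ∧ b = 0) ∨ (a = 0 ∧ b = 1) := by omega
  have key : ∀ m n d : ℕ, (5 - m % 5 + n) % 5 = d →
      B ((ρ ^ m).mulVec r) ((ρ ^ n).mulVec r) = B r ((ρ ^ d).mulVec r) := by
    intro m n d hd
    rw [hgen, hd]
  have keyv : ∀ m n : ℕ, m % 5 = n % 5 → (ρ ^ m).mulVec r = (ρ ^ n).mulVec r := by
    intro m n hmn
    rw [hmod m, hmod n, hmn]
  have hid : (ρ ^ 0).mulVec r = r := by simp
  have hone : (ρ ^ 1).mulVec r = ρ.mulVec r := by rw [pow_one]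
  rcases hcase with h | h
  · -- k = 1
    have va : B r (ρ.mulVec r) = 1 := h.1
    have v1 : B r ((ρ ^ 1).mulVec r) = 1 := by rw [hc1]; exact h.1
    have v2 : B r ((ρ ^ 2).mulVec r) = 0 := h.2
    have v3 : B r ((ρ ^ 3).mulVec r) = 0 := by rw [hc3]; exact h.2
    have v4 : B r ((ρ ^ 4).mulVec r) = 1 := by rw [hc4]; exact h.1
    have hGram : ∀ i j : Fin 4,
        B ((ρ ^ (1 * (i : ℕ))).mulVec r) ((ρ ^ (1 * (j : ℕ))).mulVec r) = A4gram i j := by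
      intro i j
      fin_cases i <;> fin_cases j <;>
        first
          | exact (key _ _ 0 (by decide)).trans (hc0.trans (by decide))
          | exact (key _ _ 1 (by decide)).trans (v1.trans (by decide))
          | exact (key _ _ 2 (by decide)).trans (v2.trans (by decide))
          | exact (key _ _ 3 (by decide)).trans (v3.trans (by decide))
          | exact (key _ _ 4 (by decide)).trans (v4.trans (by decide))
    have hLI : LinearIndependent ℤ (fun j : Fin 4 => (ρ ^ (1 * (j : ℕ))).mulVec r) := by
      rw [Fintype.linearIndependent_iff]
      intro g hg
      simp only [Fin.sum_univ_four] at hg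
      have e : ∀ i : Fin 4, g 0 * A4gram i 0 + g 1 * A4gram i 1
          + g 2 * A4gram i 2 + g 3 * A4gram i 3 = 0 := by
        intro i
        have hB := congrArg (B ((ρ ^ (1 * (i : ℕ))).mulVec r)) hg
        rw [Baddr, Baddr, Baddr, Bsmulr, Bsmulr, Bsmulr, Bsmulr, Bzeror,
          hGram, hGram, hGram, hGram] at hB
        linarith [hB]
      have e0 := e 0; have e1 := e 1; have e2 := e 2; have e3 := e 3
      rw [(by decide : A4gram 0 0 = -2), (by decide : A4gram 0 1 = 1),
        (by decide : A4gram 0 2 = 0), (by decide : A4gram 0 3 = 0)] at e0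
      rw [(by decide : A4gram 1 0 = 1), (by decide : A4gram 1 1 = -2),
        (by decide : A4gram 1 2 = 1), (by decide : A4gram 1 3 = 0)] at e1
      rw [(by decide : A4gram 2 0 = 0), (by decide : A4gram 2 1 = 1),
        (by decide : A4gram 2 2 = -2), (by decide : A4gram 2 3 = 1)] at e2
      rw [(by decide : A4gram 3 0 = 0), (by decide : A4gram 3 1 = 0),
        (by decide : A4gram 3 2 = 1), (by decide : A4gram 3 3 = -2)] at e3
      intro i
      fin_cases i
      · show g 0 = 0; omega
      · show g 1 = 0; omega
      · show g 2 = 0; omega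
      · show g 3 = 0; omega
    have hSpan : Submodule.span ℤ
        (Set.range fun j : Fin 4 => (ρ ^ (1 * (j : ℕ))).mulVec r) = R := by
      rw [hR]
      refine le_antisymm (Submodule.span_le.2 ?_) (Submodule.span_le.2 ?_)
      · rintro w ⟨j, rfl⟩
        apply Submodule.subset_span
        fin_cases j
        · exact ⟨0, by omega, (keyv _ 0 (by decide)).symm.symm⟩
        · exact ⟨1, by omega, keyv _ 1 (by decide)⟩
        · exact ⟨2, by omega, keyv _ 2 (by decide)⟩
        · exact ⟨3, by omega, keyv _ 3 (by decide)⟩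
      · rintro w ⟨i, hi, rfl⟩
        interval_cases i
        · exact Submodule.subset_span ⟨0, keyv _ _ (by decide)⟩
        · exact Submodule.subset_span ⟨1, keyv _ _ (by decide)⟩
        · exact Submodule.subset_span ⟨2, keyv _ _ (by decide)⟩
        · exact Submodule.subset_span ⟨3, keyv _ _ (by decide)⟩
        · rw [h4]
          refine neg_mem (add_mem (add_mem (add_mem ?_ ?_) ?_) ?_)
          · exact Submodule.subset_span ⟨0, (keyv _ 0 (by decide)).trans hid⟩
          · exact Submodule.subset_span ⟨1, (keyv _ 1 (by decide)).trans hone⟩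
          · exact Submodule.subset_span ⟨2, keyv _ _ (by decide)⟩
          · exact Submodule.subset_span ⟨3, keyv _ _ (by decide)⟩
    exact ⟨Or.inl h, 1, by norm_num, hLI, hSpan, hGram⟩
  · -- k = 2
    have va : B r (ρ.mulVec r) = 0 := h.1
    have v1 : B r ((ρ ^ 1).mulVec r) = 0 := by rw [hc1]; exact h.1
    have v2 : B r ((ρ ^ 2).mulVec r) = 1 := h.2
    have v3 : B r ((ρ ^ 3).mulVec r) = 1 := by rw [hc3]; exact h.2
    have v4 : B r ((ρ ^ 4).mulVec r) = 0 := by rw [hc4]; exact h.1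
    have hGram : ∀ i j : Fin 4,
        B ((ρ ^ (2 * (i : ℕ))).mulVec r) ((ρ ^ (2 * (j : ℕ))).mulVec r) = A4gram i j := by
      intro i j
      fin_cases i <;> fin_cases j <;>
        first
          | exact (key _ _ 0 (by decide)).trans (hc0.trans (by decide))
          | exact (key _ _ 1 (by decide)).trans (v1.trans (by decide))
          | exact (key _ _ 2 (by decide)).trans (v2.trans (by decide))
          | exact (key _ _ 3 (by decide)).trans (v3.trans (by decide))
          | exact (key _ _ 4 (by decide)).trans (v4.trans (by decide))
    have hLI : LinearIndependent ℤ (fun j : Fin 4 => (ρ ^ (2 * (j : ℕ))).mulVec r) := by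
      rw [Fintype.linearIndependent_iff]
      intro g hg
      simp only [Fin.sum_univ_four] at hg
      have e : ∀ i : Fin 4, g 0 * A4gram i 0 + g 1 * A4gram i 1
          + g 2 * A4gram i 2 + g 3 * A4gram i 3 = 0 := by
        intro i
        have hB := congrArg (B ((ρ ^ (2 * (i : ℕ))).mulVec r)) hg
        rw [Baddr, Baddr, Baddr, Bsmulr, Bsmulr, Bsmulr, Bsmulr, Bzeror,
          hGram, hGram, hGram, hGram] at hB
        linarith [hB]
      have e0 := e 0; have e1 := e 1; have e2 := e 2; have e3 := e 3
      rw [(by decide : A4gram 0 0 = -2), (by decide : A4gram 0 1 = 1),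
        (by decide : A4gram 0 2 = 0), (by decide : A4gram 0 3 = 0)] at e0
      rw [(by decide : A4gram 1 0 = 1), (by decide : A4gram 1 1 = -2),
        (by decide : A4gram 1 2 = 1), (by decide : A4gram 1 3 = 0)] at e1
      rw [(by decide : A4gram 2 0 = 0), (by decide : A4gram 2 1 = 1),
        (by decide : A4gram 2 2 = -2), (by decide : A4gram 2 3 = 1)] at e2
      rw [(by decide : A4gram 3 0 = 0), (by decide : A4gram 3 1 = 0),
        (by decide : A4gram 3 2 = 1), (by decide : A4gram 3 3 = -2)] at e3
      intro i
      fin_cases i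
      · show g 0 = 0; omega
      · show g 1 = 0; omega
      · show g 2 = 0; omega
      · show g 3 = 0; omega
    have hSpan : Submodule.span ℤ
        (Set.range fun j : Fin 4 => (ρ ^ (2 * (j : ℕ))).mulVec r) = R := by
      rw [hR]
      refine le_antisymm (Submodule.span_le.2 ?_) (Submodule.span_le.2 ?_)
      · rintro w ⟨j, rfl⟩
        apply Submodule.subset_span
        fin_cases j
        · exact ⟨0, by omega, keyv _ 0 (by decide)⟩
        · exact ⟨2, by omega, keyv _ 2 (by decide)⟩
        · exact ⟨4, by omega, keyv _ 4 (by decide)⟩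
        · exact ⟨1, by omega, keyv _ 1 (by decide)⟩
      · rintro w ⟨i, hi, rfl⟩
        interval_cases i
        · exact Submodule.subset_span ⟨0, keyv _ _ (by decide)⟩
        · exact Submodule.subset_span ⟨3, keyv _ _ (by decide)⟩
        · exact Submodule.subset_span ⟨1, keyv _ _ (by decide)⟩
        · rw [h3]
          refine neg_mem (add_mem (add_mem (add_mem ?_ ?_) ?_) ?_)
          · exact Submodule.subset_span ⟨0, (keyv _ 0 (by decide)).trans hid⟩
          · exact Submodule.subset_span ⟨3, (keyv _ 1 (by decide)).trans hone⟩
          · exact Submodule.subset_span ⟨1, keyv _ _ (by decide)⟩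
          · exact Submodule.subset_span ⟨2, keyv _ _ (by decide)⟩
        · exact Submodule.subset_span ⟨2, keyv _ _ (by decide)⟩
    exact ⟨Or.inr h, 2, by norm_num, hLI, hSpan, hGram⟩
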